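/- Let T be a tree on vertex set V and u : E(T) → [0,1]. Define the |V|×|V| matrix X by X_{vv} = 1 and, for v ≠ v', X_{vv'} = min over edges ℓ on the unique path in T from v to v' of u(ℓ). Then X is symmetric positive semidefinite. -/

import Mathlib

open scoped Classical
open MeasureTheory

/-- A multigraph on vertex type `V` with edge type `E`: each edge has an
unordered pair of endpoints (self-loops and multiple edges allowed). -/
structure Multigraph (V E : Type) where
  ends : E → Sym2 V

namespace Multigraph

variable {V E : Type}

/-- Two vertices are connected using only edges in the subset `S`. -/
def Connects (G : Multigraph V E) (S : Finset E) (v w : V) : Prop :=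
  Relation.ReflTransGen (fun a b => ∃ e ∈ S, G.ends e = s(a, b)) v w

/-- The multigraph is connected. -/
def IsConnected (G : Multigraph V E) [Fintype E] : Prop :=
  ∀ v w : V, G.Connects Finset.univ v w

/-- A spanning tree: a spanning connected edge subset with `|V| - 1` edges. -/
def IsSpanningTree (G : Multigraph V E) [Fintype V] [Fintype E] (T : Finset E) : Prop :=
  (∀ v w : V, G.Connects T v w) ∧ T.card = Fintype.card V - 1

/-- Kruskal's greedy algorithm: process the edges in increasing order of the
Hepp sector `σ`, inserting an edge iff it does not create a cycle (i.e. iff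
its endpoints are not yet connected by the edges selected so far). -/
noncomputable def kruskal (G : Multigraph V E) [Fintype E]
    (σ : E ≃ Fin (Fintype.card E)) : Finset E :=
  ((List.finRange (Fintype.card E)).map σ.symm).foldl
    (fun S e => if ∀ a b, G.ends e = s(a, b) → ¬ G.Connects S a b then insert e S else S) ∅

/-- The symmetric weight `w_s(G,T)`: the fraction of Hepp sectors for which
`T` is the Kruskal leading tree. -/
noncomputable def ws (G : Multigraph V E) [Fintype V] [Fintype E] (T : Finset E) : ℚ :=
  (Fintype.card {σ : E ≃ Fin (Fintype.card E) // G.kruskal σ = T} : ℚ) /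
    (Nat.factorial (Fintype.card E) : ℚ)

/-- Updating the merge relation (which vertices have been identified) after
contracting the edge `e`: the equivalence closure of `M` together with the
pair of endpoints of `e`. -/
def mergeStep (G : Multigraph V E) (M : V → V → Prop) (e : E) : V → V → Prop :=
  Relation.EqvGen (fun a b => M a b ∨ G.ends e = s(a, b))

/-- Updating the block (partition) relation after contracting the trans-block
edge `e`: the new merged vertex forms a singleton block, the endpoints of `e`
are removed from their old blocks, and all other blocks are unchanged. -/
def blockStep (G : Multigraph V E) (M B : V → V → Prop) (e : E) : V → V → Prop :=
  fun x y => ∀ a b, G.ends e = s(a, b) →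
    ((G.mergeStep M e x a ∧ G.mergeStep M e y a) ∨
      (B x y ∧ ¬ G.mergeStep M e x a ∧ ¬ G.mergeStep M e y a))

/-- One contraction step on the pair (merge relation, block relation). -/
def stepPair (G : Multigraph V E) (s : (V → V → Prop) × (V → V → Prop)) (e : E) :
    (V → V → Prop) × (V → V → Prop) :=
  (G.mergeStep s.1 e, G.blockStep s.1 s.2 e)

/-- The state (merge relation, block relation) after contracting, in order,
the edges of the list `L`, starting from the discrete merge relation `Eq` and
initial block (partition) relation `B0`. -/
def state (G : Multigraph V E) (B0 : V → V → Prop) (L : List E) :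
    (V → V → Prop) × (V → V → Prop) :=
  L.foldl G.stepPair (Eq, B0)

/-- An edge is trans-block for the block relation `B` if its endpoints lie in
distinct blocks (in particular it is not a self-loop, even after merging). -/
def TransBlock (G : Multigraph V E) (B : V → V → Prop) (e : E) : Prop :=
  ∀ a b, G.ends e = s(a, b) → ¬ B a b

/-- The ordered list of edges `L` is a trans-block ordered forest for the
initial partition `B0`: each successive edge is trans-block for the
successively contracted partition. -/
def IsTransBlockSeq (G : Multigraph V E) (B0 : V → V → Prop) (L : List E) : Prop :=
  ∀ p (h : p < L.length), G.TransBlock (G.state B0 (L.take p)).2 (L.get ⟨p, h⟩)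

/-- `k_p`: the number of trans-block edges of the `p`-th contracted graph for
the `p`-th contracted partition (already-contracted edges are self-loops of
the contracted graph, hence never trans-block). -/
noncomputable def kcount (G : Multigraph V E) [Fintype E] (B0 : V → V → Prop)
    (L : List E) (p : ℕ) : ℕ :=
  (Finset.univ.filter fun e => G.TransBlock (G.state B0 (L.take p)).2 e).card

/-- First contact index `i(v,v')`: smallest `p` such that `v, v'` lie in
different blocks of `Π_p` (with the convention `i(v,v) = -1, j(v,v) = 0`,
realized here by taking `i(v,v) = j(v,v) = 0`, which makes the corresponding
products empty, as in the convention `X_{v,v} = 1`). -/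
noncomputable def iIdx (G : Multigraph V E) (B0 : V → V → Prop) (L : List E)
    (v v' : V) : ℕ :=
  if v = v' then 0 else sInf {p | ¬ (G.state B0 (L.take p)).2 v v'}

/-- Second contact index `j(v,v')`: smallest `p` such that `v, v'` have been
merged into a single vertex of `G_p`. -/
noncomputable def jIdx (G : Multigraph V E) (B0 : V → V → Prop) (L : List E)
    (v v' : V) : ℕ :=
  sInf {p | (G.state B0 (L.take p)).1 v v'}

/-- Entry of the contact matrix: `X_{v,v'}(u) = ∏_{i(v,v') < k ≤ j(v,v')} u_k`,
where the variable `u_k` (1 ≤ k ≤ |V|-1) is represented by `w ⟨k-1⟩`. -/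
noncomputable def Xent (G : Multigraph V E) (B0 : V → V → Prop) (L : List E)
    (n : ℕ) (w : Fin n → ℝ) (v v' : V) : ℝ :=
  ∏ k : Fin n,
    if G.iIdx B0 L v v' ≤ (k : ℕ) ∧ (k : ℕ) < G.jIdx B0 L v v' then w k else 1

/-- Contact-matrix factor `X_{v(ℓ),v'(ℓ)}(u)` of a (loop) edge `ℓ`. -/
noncomputable def XentE (G : Multigraph V E) (B0 : V → V → Prop) (L : List E)
    (n : ℕ) (w : Fin n → ℝ) (e : E) : ℝ :=
  ∏ k : Fin n,
    if (∀ a b, G.ends e = s(a, b) →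
        (G.iIdx B0 L a b ≤ (k : ℕ) ∧ (k : ℕ) < G.jIdx B0 L a b)) then w k else 1

/-- Tree edge factor `Y_ℓ(u) = ∏_{i(v(ℓ),v'(ℓ)) < k < j(v(ℓ),v'(ℓ))} u_k`. -/
noncomputable def Yent (G : Multigraph V E) (B0 : V → V → Prop) (L : List E)
    (n : ℕ) (w : Fin n → ℝ) (e : E) : ℝ :=
  ∏ k : Fin n,
    if (∀ a b, G.ends e = s(a, b) →
        (G.iIdx B0 L a b ≤ (k : ℕ) ∧ (k : ℕ) + 1 < G.jIdx B0 L a b)) then w k else 1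

/-- The weight `∏_{p=0}^{|V|-2} 1/k_p` of a trans-block ordered tree, and `0`
for a non-admissible ordering. -/
noncomputable def wOrd (G : Multigraph V E) [Fintype V] [Fintype E]
    (B0 : V → V → Prop) (L : List E) : ℚ :=
  if G.IsTransBlockSeq B0 L then
    ∏ p ∈ Finset.range (Fintype.card V - 1), ((G.kcount B0 L p : ℚ))⁻¹
  else 0

/-- The partition tree weight `w^Π(G,T)`: the sum over all admissible
orderings `τ` of `T` of `∏_{p=0}^{|V|-2} 1/k_p(T_τ)`. -/
noncomputable def wPi (G : Multigraph V E) [Fintype V] [Fintype E]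
    (B0 : V → V → Prop) (T : Finset E) : ℚ :=
  ∑ τ : Fin T.card ≃ {e // e ∈ T}, G.wOrd B0 (List.ofFn fun i => ((τ i : E)))

end Multigraph


private lemma foldrMin_mem_Icc {l : List ℝ} (hl : ∀ a ∈ l, a ∈ Set.Icc (0:ℝ) 1) :
    l.foldr min 1 ∈ Set.Icc (0:ℝ) 1 := by
  induction l with
  | nil => simp
  | cons a l ih =>
    have ha := hl a (by simp)
    have ih' := ih fun b hb => hl b (by simp [hb])
    exact ⟨le_min ha.1 ih'.1, min_le_of_right_le ih'.2⟩

private lemma le_foldrMin {t : ℝ} {l : List ℝ} (h1 : t ≤ 1) (hl : ∀ a ∈ l, t ≤ a) :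
    t ≤ l.foldr min 1 := by
  induction l with
  | nil => simpa
  | cons a l ih => exact le_min (hl a (by simp)) (ih fun b hb => hl b (by simp [hb]))

private lemma foldrMin_le {a : ℝ} {l : List ℝ} (ha : a ∈ l) : l.foldr min 1 ≤ a := by
  induction l with
  | nil => simp at ha
  | cons b l ih =>
    rcases List.mem_cons.1 ha with rfl | h
    · exact min_le_left _ _
    · exact le_trans (min_le_right _ _) (ih h)

private lemma gram_nonneg {V : Type} [Fintype V] (R : V → V → Prop)
    [∀ a b, Decidable (R a b)] (hR : Equivalence R) (x : V → ℝ) :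
    0 ≤ ∑ p : V × V, (if R p.1 p.2 then x p.1 * x p.2 else 0) := by
  classical
  let s : Setoid V := ⟨R, hR⟩
  haveI : Fintype (Quotient s) :=
    @Quotient.fintype V _ s (fun a b => ‹∀ a b, Decidable (R a b)› a b)
  have key : ∀ v v' : V, ∑ q : Quotient s,
      (if Quotient.mk s v = q then x v else 0) * (if Quotient.mk s v' = q then x v' else 0)
      = (if R v v' then x v * x v' else 0) := by
    intro v v'
    rw [Finset.sum_eq_single (Quotient.mk s v)]
    · by_cases hr : R v v'
      · rw [if_pos rfl, if_pos (Quotient.sound (hR.symm hr)), if_pos hr]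
      · rw [if_pos rfl, if_neg (fun h => hr (hR.symm (Quotient.exact h))), if_neg hr, mul_zero]
    · intro q _ hq
      rw [if_neg (fun h => hq h.symm), zero_mul]
    · intro h; exact absurd (Finset.mem_univ _) h
  have total : ∑ p : V × V, (if R p.1 p.2 then x p.1 * x p.2 else 0)
      = ∑ q : Quotient s, (∑ v : V, if Quotient.mk s v = q then x v else 0)
          * (∑ v : V, if Quotient.mk s v = q then x v else 0) := by
    calc ∑ p : V × V, (if R p.1 p.2 then x p.1 * x p.2 else 0)
        = ∑ p : V × V, ∑ q : Quotient s,
            (if Quotient.mk s p.1 = q then x p.1 else 0) *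
            (if Quotient.mk s p.2 = q then x p.2 else 0) :=
          Finset.sum_congr rfl fun p _ => (key p.1 p.2).symm
      _ = ∑ q : Quotient s, ∑ p : V × V,
            (if Quotient.mk s p.1 = q then x p.1 else 0) *
            (if Quotient.mk s p.2 = q then x p.2 else 0) := Finset.sum_comm
      _ = ∑ q : Quotient s, (∑ v : V, if Quotient.mk s v = q then x v else 0)
            * (∑ v : V, if Quotient.mk s v = q then x v else 0) := by
          refine Finset.sum_congr rfl fun q _ => ?_
          rw [Fintype.sum_prod_type]
          exact (Finset.sum_mul_sum Finset.univ Finset.univ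
            (fun v : V => if Quotient.mk s v = q then x v else 0)
            (fun v : V => if Quotient.mk s v = q then x v else 0)).symm
  exact le_of_le_of_eq (Finset.sum_nonneg fun q _ => mul_self_nonneg _) total.symm

private lemma integral_indicator_Iic {c : ℝ} (hc : c ∈ Set.Icc (0:ℝ) 1) :
    ∫ t in Set.Ioc (0:ℝ) 1, Set.indicator (Set.Iic c) (fun _ => (1:ℝ)) t = c := by
  rw [MeasureTheory.integral_indicator measurableSet_Iic,
    MeasureTheory.setIntegral_const, MeasureTheory.measureReal_restrict_apply measurableSet_Iic,
    Set.inter_comm, Set.Ioc_inter_Iic, min_eq_right hc.2, Real.volume_real_Ioc]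
  simp [ENNReal.toReal_ofReal hc.1, hc.1]

/-- for a tree `T` on `V` and edge values `u : E(T) → [0,1]`, the
matrix with unit diagonal whose off-diagonal entry `X_{v,v'}` is the minimum
of `u` over the edges of the unique path in `T` from `v` to `v'` is symmetric
positive semidefinite. -/
theorem tree_path_min_matrix_posSemidef
    {V : Type} [Fintype V] [DecidableEq V]
    (T : SimpleGraph V) (hT : T.IsTree)
    (u : Sym2 V → ℝ) (hu : ∀ e, u e ∈ Set.Icc (0 : ℝ) 1)
    (X : Matrix V V ℝ)
    (hdiag : ∀ v, X v v = 1)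
    (hsymm : ∀ v v', X v v' = X v' v)
    (hpath : ∀ v v' : V, v ≠ v' → ∀ p : T.Path v v',
      X v v' = ((p : T.Walk v v').edges.map u).foldr min 1) :
    X.PosSemidef := by
  
  have hbd : ∀ v v', X v v' ∈ Set.Icc (0:ℝ) 1 := by
    intro v v'
    by_cases h : v = v'
    · subst h; rw [hdiag]; exact ⟨zero_le_one, le_refl 1⟩
    · obtain ⟨w⟩ := hT.isConnected.preconnected v v'
      rw [hpath v v' h w.toPath]
      refine foldrMin_mem_Icc ?_
      intro a ha
      obtain ⟨e, _, rfl⟩ := List.mem_map.1 ha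
      exact hu e
  have htrans : ∀ {t : ℝ} {v w v' : V}, t ≤ X v w → t ≤ X w v' → t ≤ X v v' := by
    intro t v w v' h1 h2
    by_cases hvv' : v = v'
    · subst hvv'; rw [hdiag]; exact le_trans h1 (hbd v w).2
    by_cases hvw : v = w
    · subst hvw; exact h2
    by_cases hwv' : w = v'
    · subst hwv'; exact h1
    obtain ⟨p1⟩ := hT.isConnected.preconnected v w
    obtain ⟨p2⟩ := hT.isConnected.preconnected w v'
    rw [hpath v w hvw p1.toPath] at h1
    rw [hpath w v' hwv' p2.toPath] at h2
    set q : T.Walk v v' := (p1.toPath : T.Walk v w).append (p2.toPath : T.Walk w v') with hq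
    rw [hpath v v' hvv' q.toPath]
    refine le_foldrMin (le_trans h1 (foldrMin_mem_Icc ?_).2) ?_
    · intro a ha
      obtain ⟨e, _, rfl⟩ := List.mem_map.1 ha
      exact hu e
    · intro a ha
      obtain ⟨e, he, rfl⟩ := List.mem_map.1 ha
      have he' : e ∈ q.edges := SimpleGraph.Walk.edges_bypass_subset q he
      rw [hq, SimpleGraph.Walk.edges_append] at he'
      rcases List.mem_append.1 he' with h | h
      · exact le_trans h1 (foldrMin_le (List.mem_map_of_mem (f := u) h))
      · exact le_trans h2 (foldrMin_le (List.mem_map_of_mem (f := u) h))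
  have hherm : X.IsHermitian := by
    ext i j
    simp only [Matrix.conjTranspose_apply, star_trivial]
    exact hsymm j i
  refine Matrix.posSemidef_iff_dotProduct_mulVec.2 ⟨hherm, fun x => ?_⟩
  have key : dotProduct (star x) (X.mulVec x) = ∑ p : V × V, x p.1 * X p.1 p.2 * x p.2 := by
    simp only [dotProduct, Matrix.mulVec, Pi.star_apply, star_trivial,
      Fintype.sum_prod_type, Finset.mul_sum]
    exact Finset.sum_congr rfl fun v _ => Finset.sum_congr rfl fun v' _ => by ring
  rw [key]
  have hent : ∀ p : V × V, x p.1 * X p.1 p.2 * x p.2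
      = ∫ t in Set.Ioc (0:ℝ) 1,
          (x p.1 * x p.2) * Set.indicator (Set.Iic (X p.1 p.2)) (fun _ => (1:ℝ)) t := by
    intro p
    rw [MeasureTheory.integral_const_mul, integral_indicator_Iic (hbd p.1 p.2)]
    ring
  have hint : ∀ p : V × V, p ∈ (Finset.univ : Finset (V × V)) →
      Integrable (fun t => (x p.1 * x p.2) *
        Set.indicator (Set.Iic (X p.1 p.2)) (fun _ => (1:ℝ)) t)
        (MeasureTheory.volume.restrict (Set.Ioc (0:ℝ) 1)) := by
    intro p _
    refine Integrable.const_mul ?_ _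
    refine Integrable.indicator ?_ measurableSet_Iic
    refine integrableOn_const (ne_of_lt ?_)
    rw [Real.volume_Ioc]
    exact ENNReal.ofReal_lt_top
  calc (0:ℝ) ≤ ∫ t in Set.Ioc (0:ℝ) 1, ∑ p : V × V,
        (x p.1 * x p.2) * Set.indicator (Set.Iic (X p.1 p.2)) (fun _ => (1:ℝ)) t := by
        refine MeasureTheory.setIntegral_nonneg measurableSet_Ioc ?_
        intro t ht
        have h0 : ∀ p : V × V,
            (x p.1 * x p.2) * Set.indicator (Set.Iic (X p.1 p.2)) (fun _ => (1:ℝ)) t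
            = if t ≤ X p.1 p.2 then x p.1 * x p.2 else 0 := by
          intro p
          rw [Set.indicator_apply]
          simp only [Set.mem_Iic]
          split_ifs <;> ring
        rw [Finset.sum_congr rfl fun p _ => h0 p]
        refine gram_nonneg (fun a b => t ≤ X a b) ?_ x
        refine ⟨fun a => ?_, fun {a b} h => ?_, fun {a b c} h1 h2 => htrans h1 h2⟩
        · rw [hdiag]; exact ht.2
        · rw [← hsymm]; exact h
    _ = ∑ p : V × V, x p.1 * X p.1 p.2 * x p.2 := by
        rw [MeasureTheory.integral_finset_sum Finset.univ hint]
        exact Finset.sum_congr rfl fun p _ => (hent p).symm
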